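/- Let C be a d-uniform clutter on [n] that is both chordal and co-chordal. Then for every i, λ_i(C) ≤ C(n-1-i, d-2), where λ_i(C) is the i-th entry of the λ-sequence of C. -/

import Mathlib

open Finset

namespace Clutter

variable {n : ℕ}

/-- Deletion `D ∖ e` of a `(d-1)`-set `e` from a clutter `D`: remove all circuits
containing `e`. -/
def del (D : Finset (Finset (Fin n))) (e : Finset (Fin n)) : Finset (Finset (Fin n)) :=
  D.filter (fun F => ¬ e ⊆ F)

/-- Successive deletion of a list of submaximal circuits. -/
def delList (D : Finset (Finset (Fin n))) (L : List (Finset (Fin n))) :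
    Finset (Finset (Fin n)) :=
  L.foldl del D

/-- The open neighborhood of `e` in `D`. -/
def nbhd (D : Finset (Finset (Fin n))) (e : Finset (Fin n)) : Finset (Fin n) :=
  Finset.univ.filter (fun c => insert c e ∈ D)

/-- `V` is a clique of the `d`-uniform clutter `D`: every `d`-subset of `V` is a circuit. -/
def IsClique (D : Finset (Finset (Fin n))) (d : ℕ) (V : Finset (Fin n)) : Prop :=
  ∀ F ⊆ V, F.card = d → F ∈ D

/-- `e` is a simplicial submaximal circuit of the `d`-uniform clutter `D`. -/
def IsSimplicial (D : Finset (Finset (Fin n))) (d : ℕ) (e : Finset (Fin n)) : Prop :=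
  e.card = d - 1 ∧ (∃ F ∈ D, e ⊆ F) ∧ IsClique D d (e ∪ nbhd D e)

/-- `L` is a simplicial sequence for the `d`-uniform clutter `D`. -/
def IsSimplicialSeq (D : Finset (Finset (Fin n))) (d : ℕ) (L : List (Finset (Fin n))) :
    Prop :=
  ∀ k (h : k < L.length), IsSimplicial (delList D (L.take k)) d (L.get ⟨k, h⟩)

/-- The complete `d`-uniform clutter on `n` vertices. -/
def complete (n d : ℕ) : Finset (Finset (Fin n)) :=
  Finset.univ.filter (fun F => F.card = d)

/-- `C` is co-chordal: it is obtained from the complete clutter by deleting a simplicial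
sequence. -/
def IsCoChordal (d : ℕ) (C : Finset (Finset (Fin n))) : Prop :=
  ∃ L, IsSimplicialSeq (complete n d) d L ∧ delList (complete n d) L = C

/-- The `i`-th entry of the λ-sequence of `C` computed from the simplicial order `L`:
the number of steps whose open neighborhood has exactly `i` elements. -/
def lamCount (C : Finset (Finset (Fin n))) (L : List (Finset (Fin n))) (i : ℕ) : ℕ :=
  ((List.finRange L.length).filter
    (fun (k : Fin L.length) => (nbhd (delList C (L.take k.1)) (L.get k)).card = i)).length

/-! ### Auxiliary lemmas -/

lemma mem_del {D : Finset (Finset (Fin n))} {e F : Finset (Fin n)} :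
    F ∈ del D e ↔ F ∈ D ∧ ¬ e ⊆ F := by simp [del]

lemma del_subset (D : Finset (Finset (Fin n))) (e : Finset (Fin n)) : del D e ⊆ D :=
  filter_subset _ _

lemma delList_nil (D : Finset (Finset (Fin n))) : delList D [] = D := rfl

lemma delList_cons (D : Finset (Finset (Fin n))) (e : Finset (Fin n))
    (L : List (Finset (Fin n))) : delList D (e :: L) = delList (del D e) L := rfl

lemma delList_append (D : Finset (Finset (Fin n))) (M L : List (Finset (Fin n))) :
    delList D (M ++ L) = delList (delList D M) L := by
  simp [delList, List.foldl_append]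

lemma mem_nbhd {D : Finset (Finset (Fin n))} {e : Finset (Fin n)} {c : Fin n} :
    c ∈ nbhd D e ↔ insert c e ∈ D := by simp [nbhd]

lemma isSimplicialSeq_cons {D : Finset (Finset (Fin n))} {d : ℕ} {e : Finset (Fin n)}
    {L : List (Finset (Fin n))} :
    IsSimplicialSeq D d (e :: L) ↔ IsSimplicial D d e ∧ IsSimplicialSeq (del D e) d L := by
  constructor
  · intro h
    refine ⟨by simpa [delList_nil] using h 0 (by simp), fun k hk => ?_⟩
    have h2 := h (k + 1) (by simpa using Nat.succ_lt_succ hk)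
    simpa [delList_cons, List.take_succ_cons] using h2
  · rintro ⟨h0, h⟩ k hk
    cases k with
    | zero => simpa [delList_nil] using h0
    | succ k =>
      have hk' : k < L.length := by simpa using Nat.lt_of_succ_lt_succ hk
      simpa [delList_cons, List.take_succ_cons] using h k hk'

lemma isSimplicialSeq_append {D : Finset (Finset (Fin n))} {d : ℕ}
    {M L : List (Finset (Fin n))} (h1 : IsSimplicialSeq D d M)
    (h2 : IsSimplicialSeq (delList D M) d L) : IsSimplicialSeq D d (M ++ L) := by
  induction M generalizing D with
  | nil => simpa [delList_nil] using h2
  | cons e M ih =>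
    rw [List.cons_append, isSimplicialSeq_cons]
    rw [isSimplicialSeq_cons] at h1
    exact ⟨h1.1, ih h1.2 (by simpa [delList_cons] using h2)⟩

/-- The list of neighborhood sizes along a deletion sequence. -/
def msizes : Finset (Finset (Fin n)) → List (Finset (Fin n)) → List ℕ
  | _, [] => []
  | D, e :: L => (nbhd D e).card :: msizes (del D e) L

lemma lamCount_nil (D : Finset (Finset (Fin n))) (i : ℕ) : lamCount D [] i = 0 := by
  simp [lamCount]

lemma lamCount_cons (D : Finset (Finset (Fin n))) (e : Finset (Fin n))
    (L : List (Finset (Fin n))) (i : ℕ) :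
    lamCount D (e :: L) i
      = (if (nbhd D e).card = i then 1 else 0) + lamCount (del D e) L i := by
  unfold lamCount
  rw [← List.countP_eq_length_filter, ← List.countP_eq_length_filter]
  show List.countP _ (List.finRange (L.length + 1)) = _
  rw [List.finRange_succ, List.countP_cons, List.countP_map]
  have hcongr : List.countP
      ((fun (k : Fin (e :: L).length) =>
        decide ((nbhd (delList D ((e :: L).take k.1)) ((e :: L).get k)).card = i)) ∘ Fin.succ)
      (List.finRange L.length)
      = List.countP
        (fun (k : Fin L.length) =>
          decide ((nbhd (delList (del D e) (L.take k.1)) (L.get k)).card = i))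
      (List.finRange L.length) := by
    apply List.countP_congr
    intro k _
    simp [Function.comp, delList_cons, List.take_succ_cons]
    exact decide_eq_true_iff
  rw [hcongr]
  by_cases h : (nbhd D e).card = i <;>
    simp [h, delList_nil, Nat.add_comm]

lemma lamCount_eq_count (D : Finset (Finset (Fin n))) (L : List (Finset (Fin n))) (i : ℕ) :
    lamCount D L i = (msizes D L).count i := by
  induction L generalizing D with
  | nil => simp [lamCount_nil, msizes]
  | cons e L ih =>
    rw [lamCount_cons, msizes, List.count_cons, ih]
    by_cases h : (nbhd D e).card = i <;> simp [h] <;> omega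

lemma msizes_append (D : Finset (Finset (Fin n))) (M L : List (Finset (Fin n))) :
    msizes D (M ++ L) = msizes D M ++ msizes (delList D M) L := by
  induction M generalizing D with
  | nil => simp [msizes, delList_nil]
  | cons e M ih => simp [msizes, ih, delList_cons]

lemma not_mem_of_mem_nbhd {D : Finset (Finset (Fin n))} {d : ℕ} (hd : 1 ≤ d)
    (hU : ∀ F ∈ D, F.card = d) {e : Finset (Fin n)} {c : Fin n}
    (hc : c ∈ nbhd D e) (he : e.card = d - 1) : c ∉ e := by
  intro hce
  have h1 : insert c e ∈ D := mem_nbhd.1 hc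
  have h2 := hU _ h1
  rw [Finset.insert_eq_self.2 hce] at h2
  omega

lemma nbhd_card_le {D : Finset (Finset (Fin n))} {d : ℕ} {e : Finset (Fin n)} (hd : 1 ≤ d)
    (hU : ∀ F ∈ D, F.card = d) (he : e.card = d - 1) :
    (nbhd D e).card ≤ n - (d - 1) := by
  have h1 : nbhd D e ⊆ univ \ e := fun c hc =>
    mem_sdiff.2 ⟨mem_univ _, not_mem_of_mem_nbhd hd hU hc he⟩
  calc (nbhd D e).card ≤ (univ \ e).card := card_le_card h1
    _ = n - (d - 1) := by
        rw [card_sdiff_of_subset (subset_univ e), card_univ, Fintype.card_fin, he]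

lemma one_le_nbhd_card {D : Finset (Finset (Fin n))} {d : ℕ} {e : Finset (Fin n)}
    (hd : 1 ≤ d) (hU : ∀ F ∈ D, F.card = d) (he : IsSimplicial D d e) :
    1 ≤ (nbhd D e).card := by
  obtain ⟨hcard, ⟨F, hF, heF⟩, _⟩ := he
  have hFd := hU F hF
  have hlt : e.card < F.card := by omega
  obtain ⟨c, hcF, hce⟩ : ∃ c ∈ F, c ∉ e := by
    by_contra h
    push_neg at h
    have : F ⊆ e := h
    have := card_le_card this
    omega
  have hsub : insert c e ⊆ F := insert_subset hcF heF
  have hc : insert c e = F := eq_of_subset_of_card_le hsub (by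
    rw [card_insert_of_notMem hce]; omega)
  have : c ∈ nbhd D e := mem_nbhd.2 (hc ▸ hF)
  exact card_pos.2 ⟨c, this⟩

lemma msizes_bounds {D : Finset (Finset (Fin n))} {d : ℕ} {L : List (Finset (Fin n))}
    (hd : 1 ≤ d) (hU : ∀ F ∈ D, F.card = d) (hL : IsSimplicialSeq D d L) :
    ∀ x ∈ msizes D L, 1 ≤ x ∧ x ≤ n - (d - 1) := by
  induction L generalizing D with
  | nil => simp [msizes]
  | cons e L ih =>
    rw [isSimplicialSeq_cons] at hL
    intro x hx
    rw [msizes, List.mem_cons] at hx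
    rcases hx with rfl | h
    · exact ⟨one_le_nbhd_card hd hU hL.1, nbhd_card_le hd hU hL.1.1⟩
    · exact ih (fun F hF => hU F (del_subset _ _ hF)) hL.2 x h

instance (D : Finset (Finset (Fin n))) (d : ℕ) (V : Finset (Fin n)) :
    Decidable (IsClique D d V) :=
  decidable_of_iff (∀ F ∈ V.powerset, F.card = d → F ∈ D)
    (by simp [IsClique, Finset.mem_powerset])

/-- Number of cliques of a given size. -/
def cliqueCount (D : Finset (Finset (Fin n))) (d s : ℕ) : ℕ :=
  (Finset.univ.filter (fun W => IsClique D d W ∧ W.card = s)).card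

lemma subset_clique {D : Finset (Finset (Fin n))} {d : ℕ} {V W : Finset (Fin n)}
    (h : IsClique D d V) (hWV : W ⊆ V) : IsClique D d W :=
  fun F hF hc => h F (hF.trans hWV) hc

lemma clique_step {D : Finset (Finset (Fin n))} {d : ℕ} (hd : 1 ≤ d)
    (hU : ∀ F ∈ D, F.card = d) {e : Finset (Fin n)} (he : IsSimplicial D d e)
    {k : ℕ} (hk : 1 ≤ k) :
    cliqueCount D d (d - 1 + k) =
      cliqueCount (del D e) d (d - 1 + k) + (nbhd D e).card.choose k := by
  have hecard : e.card = d - 1 := he.1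
  have hcl : IsClique D d (e ∪ nbhd D e) := he.2.2
  have hnotmem : ∀ c ∈ nbhd D e, c ∉ e := fun c hc =>
    not_mem_of_mem_nbhd hd hU hc hecard
  have hdisj : ∀ S ⊆ nbhd D e, Disjoint e S := fun S hS =>
    Finset.disjoint_left.2 fun a ha haS => hnotmem a (hS haS) ha
  have hcardES : ∀ S ⊆ nbhd D e, S.card = k → (e ∪ S).card = d - 1 + k := by
    intro S hS hSc
    rw [Finset.card_union_of_disjoint (hdisj S hS), hecard, hSc]
  have hNewClique : ∀ S ⊆ nbhd D e, IsClique D d (e ∪ S) := fun S hS =>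
    subset_clique hcl (union_subset_union Subset.rfl hS)
  have key : (univ.filter fun W => IsClique D d W ∧ W.card = d - 1 + k)
      = (univ.filter fun W => IsClique (del D e) d W ∧ W.card = d - 1 + k)
        ∪ ((nbhd D e).powersetCard k).image (fun S => e ∪ S) := by
    ext W
    simp only [mem_filter, mem_univ, true_and, mem_union, mem_image, mem_powersetCard]
    constructor
    · rintro ⟨hWcl, hWcard⟩
      by_cases hB : IsClique (del D e) d W
      · exact Or.inl ⟨hB, hWcard⟩
      · right
        have hex : ∃ F, F ⊆ W ∧ F.card = d ∧ F ∉ del D e := by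
          by_contra hcon
          push_neg at hcon
          exact hB fun F hF hFc => hcon F hF hFc
        obtain ⟨F, hFW, hFd, hFdel⟩ := hex
        have hFD : F ∈ D := hWcl F hFW hFd
        have heF : e ⊆ F := by
          by_contra hcon
          exact hFdel (mem_del.2 ⟨hFD, hcon⟩)
        have heW : e ⊆ W := heF.trans hFW
        refine ⟨W \ e, ⟨fun c hc => ?_, ?_⟩, ?_⟩
        · have hcW : c ∈ W := (mem_sdiff.1 hc).1
          have hce : c ∉ e := (mem_sdiff.1 hc).2
          have hcd : (insert c e).card = d := by
            rw [card_insert_of_notMem hce, hecard]; omega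
          exact mem_nbhd.2 (hWcl _ (insert_subset hcW heW) hcd)
        · rw [card_sdiff_of_subset heW, hWcard, hecard]; omega
        · exact union_sdiff_of_subset heW
    · rintro (⟨hB, hc⟩ | ⟨S, ⟨hSN, hSk⟩, rfl⟩)
      · exact ⟨fun F hF hFc => del_subset _ _ (hB F hF hFc), hc⟩
      · exact ⟨hNewClique S hSN, hcardES S hSN hSk⟩
  have hdisjBN : Disjoint
      (univ.filter fun W => IsClique (del D e) d W ∧ W.card = d - 1 + k)
      (((nbhd D e).powersetCard k).image (fun S => e ∪ S)) := by
    rw [Finset.disjoint_right]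
    intro W hWimg hWB
    obtain ⟨S, hS, rfl⟩ := mem_image.1 hWimg
    obtain ⟨hSN, hSk⟩ := mem_powersetCard.1 hS
    have hS0 : S.Nonempty := card_pos.1 (by omega)
    obtain ⟨c, hc⟩ := hS0
    have hclW : IsClique (del D e) d (e ∪ S) := (mem_filter.1 hWB).2.1
    have hins : insert c e ⊆ e ∪ S :=
      insert_subset (mem_union_right _ hc) subset_union_left
    have hcard : (insert c e).card = d := by
      rw [card_insert_of_notMem (hnotmem c (hSN hc)), hecard]; omega
    have hmem : insert c e ∈ del D e := hclW _ hins hcard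
    exact (mem_del.1 hmem).2 (subset_insert _ _)
  have hcardNew : (((nbhd D e).powersetCard k).image (fun S => e ∪ S)).card
      = (nbhd D e).card.choose k := by
    rw [Finset.card_image_of_injOn, card_powersetCard]
    intro S1 h1 S2 h2 hEq
    have d1 := hdisj S1 (mem_powersetCard.1 h1).1
    have d2 := hdisj S2 (mem_powersetCard.1 h2).1
    calc S1 = (e ∪ S1) \ e := (union_sdiff_cancel_left d1).symm
      _ = (e ∪ S2) \ e := by
            have hEq' : e ∪ S1 = e ∪ S2 := hEq
            rw [hEq']
      _ = S2 := union_sdiff_cancel_left d2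
  unfold cliqueCount
  rw [key, card_union_of_disjoint hdisjBN, hcardNew]

lemma cliqueCount_empty {d s : ℕ} (hds : d ≤ s) (hd : 1 ≤ d) :
    cliqueCount (∅ : Finset (Finset (Fin n))) d s = 0 := by
  unfold cliqueCount
  rw [Finset.card_eq_zero]
  rw [Finset.eq_empty_iff_forall_notMem]
  intro W hW
  obtain ⟨hcl, hcard⟩ := (mem_filter.1 hW).2
  obtain ⟨G, hGW, hGc⟩ := Finset.exists_subset_card_eq (s := W) (n := d) (by omega)
  exact Finset.notMem_empty G (hcl G hGW hGc)

lemma cliqueCount_eq_sum {d : ℕ} (hd : 1 ≤ d) :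
    ∀ (L : List (Finset (Fin n))) (D : Finset (Finset (Fin n))),
      (∀ F ∈ D, F.card = d) → IsSimplicialSeq D d L → delList D L = ∅ →
      ∀ k, 1 ≤ k →
        cliqueCount D d (d - 1 + k) = ((msizes D L).map (fun m => m.choose k)).sum := by
  intro L
  induction L with
  | nil =>
    intro D hU hseq hdel k hk
    rw [delList_nil] at hdel
    subst hdel
    simpa [msizes] using cliqueCount_empty (by omega) hd
  | cons e L ih =>
    intro D hU hseq hdel k hk
    rw [isSimplicialSeq_cons] at hseq
    rw [msizes, List.map_cons, List.sum_cons]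
    rw [clique_step hd hU hseq.1 hk,
      ih (del D e) (fun F hF => hU F (del_subset _ _ hF)) hseq.2
        (by rw [← delList_cons]; exact hdel) k hk]
    omega

lemma mem_complete {d : ℕ} {F : Finset (Fin n)} : F ∈ complete n d ↔ F.card = d := by
  simp [complete]

lemma cliqueCount_complete (d s : ℕ) :
    cliqueCount (complete n d) d s = n.choose s := by
  unfold cliqueCount
  have h1 : (univ.filter fun W => IsClique (complete n d) d W ∧ W.card = s)
      = univ.filter fun W : Finset (Fin n) => W.card = s := by
    ext W
    simp only [mem_filter, mem_univ, true_and, and_iff_right_iff_imp]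
    intro _
    exact fun F _ hF => mem_complete.2 hF
  rw [h1]
  have h2 : (univ.filter fun W : Finset (Fin n) => W.card = s)
      = Finset.powersetCard s (univ : Finset (Fin n)) := by
    rw [Finset.powersetCard_eq_filter, Finset.powerset_univ]
  rw [h2, card_powersetCard, card_univ, Fintype.card_fin]

/-! ### Binomial identities -/

lemma sum_range_choose_eq (N a : ℕ) :
    ∑ i ∈ Finset.range N, i.choose a = N.choose (a + 1) := by
  induction N with
  | zero => simp
  | succ N ih =>
    rw [Finset.sum_range_succ, ih, Nat.choose_succ_succ' N a]
    omega

lemma dual_vandermonde :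
    ∀ (m a b : ℕ),
      ∑ i ∈ Finset.range (m + 1), (i.choose a) * ((m - i).choose b)
        = (m + 1).choose (a + b + 1) := by
  intro m
  induction m with
  | zero =>
    intro a b
    rw [Finset.sum_range_one, Nat.sub_self]
    rcases Nat.eq_zero_or_pos (a + b) with h | h
    · have ha : a = 0 := by omega
      have hb : b = 0 := by omega
      subst ha; subst hb; simp
    · rw [Nat.choose_eq_zero_of_lt (show 1 < a + b + 1 by omega)]
      rcases Nat.eq_zero_or_pos a with ha | ha
      · subst ha
        rw [Nat.choose_eq_zero_of_lt (show 0 < b by omega)]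
        simp
      · rw [Nat.choose_eq_zero_of_lt ha]
        simp
  | succ m ih =>
    intro a b
    cases b with
    | zero =>
      simp only [Nat.choose_zero_right, mul_one]
      exact sum_range_choose_eq (m + 2) a
    | succ b =>
      rw [Finset.sum_range_succ, Nat.sub_self]
      simp only [Nat.choose_zero_succ, Nat.mul_zero, Nat.add_zero]
      have hsum : ∀ i ∈ Finset.range (m + 1),
          (i.choose a) * ((m + 1 - i).choose (b + 1))
            = (i.choose a) * ((m - i).choose b) + (i.choose a) * ((m - i).choose (b + 1)) := by
        intro i hi
        rw [Finset.mem_range] at hi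
        have h1 : m + 1 - i = (m - i) + 1 := by omega
        rw [h1, Nat.choose_succ_succ (m - i) b, Nat.mul_add]
      rw [Finset.sum_congr rfl hsum, Finset.sum_add_distrib, ih a b, ih a (b + 1),
        show a + (b + 1) + 1 = a + b + 1 + 1 from by omega,
        Nat.choose_succ_succ (m + 1) (a + b + 1)]

/-! ### Multiset uniqueness -/

lemma sum_choose_top (T : ℕ) :
    ∀ (M : Multiset ℕ), (∀ x ∈ M, x ≤ T + 1) →
      (M.map (fun m => m.choose (T + 1))).sum = M.count (T + 1) := by
  intro M
  induction M using Multiset.induction_on with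
  | empty => simp
  | cons a M ihM =>
    intro h
    have ha := h a (Multiset.mem_cons_self a M)
    rw [Multiset.map_cons, Multiset.sum_cons, Multiset.count_cons,
      ihM (fun x hx => h x (Multiset.mem_cons_of_mem hx))]
    by_cases hEq : a = T + 1
    · subst hEq
      rw [Nat.choose_self, if_pos rfl]
      omega
    · rw [Nat.choose_eq_zero_of_lt (by omega), if_neg (fun hcon => hEq hcon.symm)]
      omega

lemma multiset_unique :
    ∀ (T : ℕ) (A B : Multiset ℕ),
      (∀ x ∈ A, 1 ≤ x ∧ x ≤ T) → (∀ x ∈ B, 1 ≤ x ∧ x ≤ T) →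
      (∀ k, 1 ≤ k → (A.map (fun m => m.choose k)).sum = (B.map (fun m => m.choose k)).sum) →
      A = B := by
  intro T
  induction T with
  | zero =>
    intro A B hA hB _
    have hA0 : A = 0 := Multiset.eq_zero_of_forall_notMem fun x hx => by
      have := hA x hx; omega
    have hB0 : B = 0 := Multiset.eq_zero_of_forall_notMem fun x hx => by
      have := hB x hx; omega
    rw [hA0, hB0]
  | succ T ih =>
    intro A B hA hB hsum
    classical
    have hcA : (A.map (fun m => m.choose (T + 1))).sum = A.count (T + 1) :=
      sum_choose_top T A fun x hx => (hA x hx).2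
    have hcB : (B.map (fun m => m.choose (T + 1))).sum = B.count (T + 1) :=
      sum_choose_top T B fun x hx => (hB x hx).2
    have hcount : A.count (T + 1) = B.count (T + 1) := by
      rw [← hcA, ← hcB]; exact hsum (T + 1) (by omega)
    set c := A.count (T + 1) with hc
    have hAsplit : A.filter (fun x => ¬ x = T + 1) + Multiset.replicate c (T + 1) = A := by
      have h1 := Multiset.filter_add_not (fun x => x = T + 1) A
      have h2 : A.filter (fun x => x = T + 1) = Multiset.replicate c (T + 1) := by
        rw [Multiset.filter_eq', ← hc]
      conv_rhs => rw [← h1, h2]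
      exact add_comm _ _
    have hBsplit : B.filter (fun x => ¬ x = T + 1) + Multiset.replicate c (T + 1) = B := by
      have h1 := Multiset.filter_add_not (fun x => x = T + 1) B
      have h2 : B.filter (fun x => x = T + 1) = Multiset.replicate c (T + 1) := by
        rw [Multiset.filter_eq', ← hcount]
      conv_rhs => rw [← h1, h2]
      exact add_comm _ _
    set A' := A.filter (fun x => ¬ x = T + 1) with hA'
    set B' := B.filter (fun x => ¬ x = T + 1) with hB'
    have hA'b : ∀ x ∈ A', 1 ≤ x ∧ x ≤ T := by
      intro x hx
      have h1 := Multiset.of_mem_filter hx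
      have h2 := hA x (Multiset.mem_of_mem_filter hx)
      constructor
      · exact h2.1
      · have := h2.2; omega
    have hB'b : ∀ x ∈ B', 1 ≤ x ∧ x ≤ T := by
      intro x hx
      have h1 := Multiset.of_mem_filter hx
      have h2 := hB x (Multiset.mem_of_mem_filter hx)
      constructor
      · exact h2.1
      · have := h2.2; omega
    have hsum' : ∀ k, 1 ≤ k →
        (A'.map (fun m => m.choose k)).sum = (B'.map (fun m => m.choose k)).sum := by
      intro k hk
      have hAk := hsum k hk
      rw [← hAsplit, ← hBsplit] at hAk
      simp only [Multiset.map_add, Multiset.sum_add, Multiset.map_replicate,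
        Multiset.sum_replicate, smul_eq_mul] at hAk
      omega
    have : A' = B' := ih A' B' hA'b hB'b hsum'
    rw [← hAsplit, ← hBsplit, this]

lemma multiset_map_finsum {ι β : Type*} (s : Finset ι) (f : ι → Multiset ℕ) (g : ℕ → β) :
    (∑ j ∈ s, f j).map g = ∑ j ∈ s, (f j).map g := by
  induction s using Finset.cons_induction with
  | empty => simp
  | cons a s ha ih => simp [Finset.sum_cons, ih]

lemma multiset_sum_finsum {ι : Type*} (s : Finset ι) (f : ι → Multiset ℕ) :
    (∑ j ∈ s, f j).sum = ∑ j ∈ s, (f j).sum := by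
  induction s using Finset.cons_induction with
  | empty => simp
  | cons a s ha ih => simp [Finset.sum_cons, ih]

/-! ### Main theorem -/

/-- If a `d`-uniform clutter `C` on `[n]` is both chordal (witnessed by the simplicial
order `L`) and co-chordal, then `λ_i(C) ≤ C(n-1-i, d-2)` for all `i`. -/
theorem stmt19 (n d : ℕ) (hd : 1 ≤ d) (C : Finset (Finset (Fin n)))
    (hunif : ∀ F ∈ C, F.card = d)
    (hco : IsCoChordal d C)
    (L : List (Finset (Fin n))) (hL : IsSimplicialSeq C d L) (hL' : delList C L = ∅)
    (i : ℕ) :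
    lamCount C L i ≤ (n - 1 - i).choose (d - 2) := by
  classical
  by_cases hd1 : d = 1
  · subst hd1
    have hrhs : (n - 1 - i).choose (1 - 2) = 1 := by
      norm_num
    rw [hrhs]
    have hlen : L.length ≤ 1 := by
      by_contra hcon
      push_neg at hcon
      match L, hcon with
      | e0 :: e1 :: rest, _ =>
        have h0 := hL 0 (by simp)
        have h1 := hL 1 (by simp)
        have he0 : e0.card = 0 := by simpa using h0.1
        have he0' : e0 = ∅ := Finset.card_eq_zero.1 he0
        have hdel : delList C ((e0 :: e1 :: rest).take 1) = ∅ := by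
          simp only [List.take_succ_cons, List.take_zero]
          rw [delList_cons, delList_nil]
          rw [Finset.eq_empty_iff_forall_notMem]
          intro F hF
          exact (mem_del.1 hF).2 (he0' ▸ Finset.empty_subset F)
        obtain ⟨F, hF, _⟩ := h1.2.1
        rw [hdel] at hF
        exact Finset.notMem_empty F hF
    calc lamCount C L i ≤ (List.finRange L.length).length := List.length_filter_le _ _
      _ = L.length := List.length_finRange
      _ ≤ 1 := hlen
  · have hd2 : 2 ≤ d := by omega
    obtain ⟨M, hM, hMC⟩ := hco
    have hUcomp : ∀ F ∈ complete n d, F.card = d := fun F hF => mem_complete.1 hF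
    have hseq : IsSimplicialSeq (complete n d) d (M ++ L) :=
      isSimplicialSeq_append hM (by rw [hMC]; exact hL)
    have hdel : delList (complete n d) (M ++ L) = ∅ := by
      rw [delList_append, hMC, hL']
    have hmsz : msizes (complete n d) (M ++ L) = msizes (complete n d) M ++ msizes C L := by
      rw [msizes_append, hMC]
    have hcount : lamCount C L i ≤ (msizes (complete n d) (M ++ L)).count i := by
      rw [hmsz, List.count_append, lamCount_eq_count]
      omega
    have hbounds := msizes_bounds hd hUcomp hseq
    rcases Nat.eq_zero_or_pos i with rfl | hi
    · have hzero : (msizes (complete n d) (M ++ L)).count 0 = 0 := by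
        rw [List.count_eq_zero]
        intro h
        have := (hbounds 0 h).1
        omega
      omega
    · by_cases hile : i ≤ n - (d - 1)
      swap
      · have hzero : (msizes (complete n d) (M ++ L)).count i = 0 := by
          rw [List.count_eq_zero]
          intro h
          have := (hbounds i h).2
          omega
        omega
      · -- main case: 1 ≤ i ≤ n - (d-1), so n ≥ d ≥ 2
        have hn : d ≤ n := by omega
        have hn1 : 1 ≤ n := by omega
        set A : Multiset ℕ := (msizes (complete n d) (M ++ L) : Multiset ℕ) with hAdef
        set B : Multiset ℕ := ∑ j ∈ Finset.Icc 1 (n + 1 - d),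
          Multiset.replicate ((n - 1 - j).choose (d - 2)) j with hBdef
        have hAb : ∀ x ∈ A, 1 ≤ x ∧ x ≤ n := by
          intro x hx
          have hx' : x ∈ msizes (complete n d) (M ++ L) := by
            simpa [hAdef] using hx
          have := hbounds x hx'
          omega
        have hBb : ∀ x ∈ B, 1 ≤ x ∧ x ≤ n := by
          intro x hx
          rw [hBdef, Multiset.mem_sum] at hx
          obtain ⟨j, hj, hxj⟩ := hx
          have := Multiset.eq_of_mem_replicate hxj
          subst this
          rw [Finset.mem_Icc] at hj
          omega
        have hsums : ∀ k, 1 ≤ k →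
            (A.map (fun m => m.choose k)).sum = (B.map (fun m => m.choose k)).sum := by
          intro k hk
          have hAsum : (A.map (fun m => m.choose k)).sum = n.choose (d - 1 + k) := by
            rw [hAdef]
            rw [show ((msizes (complete n d) (M ++ L) : Multiset ℕ).map
                (fun m => m.choose k)).sum
              = ((msizes (complete n d) (M ++ L)).map (fun m => m.choose k)).sum by
                simp]
            rw [← cliqueCount_eq_sum hd (M ++ L) (complete n d) hUcomp hseq hdel k hk]
            exact cliqueCount_complete d (d - 1 + k)
          have hBsum : (B.map (fun m => m.choose k)).sum = n.choose (d - 1 + k) := by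
            rw [hBdef, multiset_map_finsum, multiset_sum_finsum]
            have hterm : ∀ j ∈ Finset.Icc 1 (n + 1 - d),
                ((Multiset.replicate ((n - 1 - j).choose (d - 2)) j).map
                  (fun m => m.choose k)).sum
                  = (j.choose k) * ((n - 1 - j).choose (d - 2)) := by
              intro j _
              rw [Multiset.map_replicate, Multiset.sum_replicate, smul_eq_mul]
              ring
            rw [Finset.sum_congr rfl hterm]
            have hext : ∑ j ∈ Finset.Icc 1 (n + 1 - d),
                (j.choose k) * ((n - 1 - j).choose (d - 2))
                = ∑ j ∈ Finset.range n, (j.choose k) * ((n - 1 - j).choose (d - 2)) := by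
              apply Finset.sum_subset
              · intro j hj
                rw [Finset.mem_Icc] at hj
                rw [Finset.mem_range]
                omega
              · intro j hj hj'
                rw [Finset.mem_range] at hj
                rw [Finset.mem_Icc] at hj'
                push_neg at hj'
                rcases Nat.eq_zero_or_pos j with rfl | hjpos
                · rw [Nat.choose_eq_zero_of_lt (by omega)]
                  ring
                · have hjbig : n + 1 - d < j := hj' hjpos
                  rw [Nat.choose_eq_zero_of_lt (show n - 1 - j < d - 2 by omega)]
                  ring
            rw [hext]
            have hdv := dual_vandermonde (n - 1) k (d - 2)
            rw [show n - 1 + 1 = n by omega] at hdv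
            rw [hdv]
            congr 1
            omega
          rw [hAsum, hBsum]
        have hAB : A = B := multiset_unique n A B hAb hBb hsums
        have hBcount : B.count i = (n - 1 - i).choose (d - 2) := by
          rw [hBdef, Multiset.count_sum']
          rw [Finset.sum_eq_single i]
          · rw [Multiset.count_replicate]
            simp
          · intro j _ hji
            rw [Multiset.count_replicate, if_neg (by omega)]
          · intro hnotin
            exfalso
            apply hnotin
            rw [Finset.mem_Icc]
            omega
        have hAcount : A.count i = (msizes (complete n d) (M ++ L)).count i := by
          rw [hAdef]
          exact Multiset.coe_count i _
        have hfin : Multiset.count i A = Multiset.count i B := by rw [hAB]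
        omega

end Clutter
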